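/- With f(x) = ∑_{j∈A} x_j + ∑_{j∈A^c} E_j x_j - (1/2)·E[max_{1≤j≤n} Ω_j x_j], where Ω_j = 1 a.s. for j ∈ A, Ω_j ≥ 0 a.s. with E[Ω_j] = E_j for j ∈ A^c: if x ≥ y entrywise with x, y ∈ ℝ^n nonnegative, then f(x) - f(y) ≥ (1/2)∑_{j∈A}(x_j - y_j) + (1/2)∑_{j∈A^c} E_j (x_j - y_j) ≥ 0; in particular f is entrywise nondecreasing on the nonnegative orthant. -/

import Mathlib

open Finset MeasureTheory

lemma integrable_sup'_aux {Ω : Type*} [MeasurableSpace Ω] {μ : Measure Ω}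
    {ι : Type*} (s : Finset ι) (g : ι → Ω → ℝ)
    (h : ∀ i, Integrable (g i) μ) :
    ∀ hs : s.Nonempty, Integrable (fun ω => s.sup' hs fun i => g i ω) μ := by
  induction s using Finset.cons_induction with
  | empty => intro hs; exact absurd hs (by simp)
  | cons a s ha ih =>
    intro hs
    rcases s.eq_empty_or_nonempty with rfl | hs'
    · simpa using h a
    · have h2 := (h a).sup (ih hs')
      have heq : (fun ω => (Finset.cons a s ha).sup' hs fun i => g i ω)
          = (g a ⊔ fun ω => s.sup' hs' fun i => g i ω) := by
        funext ω
        rw [Pi.sup_apply]; exact Finset.sup'_cons hs' _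
      rw [heq]
      exact h2

/-- Entrywise monotonicity of f on the nonnegative orthant, with quantitative bound. -/
theorem stmt7 (n : ℕ) (hn : 0 < n) {Ω : Type*} [MeasurableSpace Ω]
    (μ : Measure Ω) [IsProbabilityMeasure μ]
    (A : Finset (Fin n)) (E : Fin n → ℝ)
    (Om : Ω → Fin n → ℝ)
    (hnn : ∀ j, ∀ᵐ ω ∂μ, 0 ≤ Om ω j)
    (hone : ∀ j ∈ A, ∀ᵐ ω ∂μ, Om ω j = 1)
    (hint : ∀ j, Integrable (fun ω => Om ω j) μ)
    (hEeq : ∀ j ∈ Aᶜ, ∫ ω, Om ω j ∂μ = E j)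
    (f : (Fin n → ℝ) → ℝ)
    (hf : ∀ x, f x = (∑ j ∈ A, x j) + (∑ j ∈ Aᶜ, E j * x j)
      - (1/2) * ∫ ω, Finset.univ.sup' ⟨⟨0, hn⟩, Finset.mem_univ _⟩
          (fun j => Om ω j * x j) ∂μ) :
    ∀ x y : Fin n → ℝ, (∀ j, 0 ≤ y j) → (∀ j, y j ≤ x j) →
      (0 ≤ (1/2) * (∑ j ∈ A, (x j - y j)) + (1/2) * ∑ j ∈ Aᶜ, E j * (x j - y j)) ∧
      ((1/2) * (∑ j ∈ A, (x j - y j)) + (1/2) * (∑ j ∈ Aᶜ, E j * (x j - y j))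
        ≤ f x - f y) := by
  intro x y hy hxy
  have hd : ∀ j, 0 ≤ x j - y j := fun j => sub_nonneg.2 (hxy j)
  have hE0 : ∀ j ∈ Aᶜ, 0 ≤ E j := by
    intro j hj
    rw [← hEeq j hj]
    exact integral_nonneg_of_ae (hnn j)
  have hS0 : 0 ≤ (1/2) * (∑ j ∈ A, (x j - y j)) + (1/2) * ∑ j ∈ Aᶜ, E j * (x j - y j) := by
    apply add_nonneg
    · exact mul_nonneg (by norm_num) (Finset.sum_nonneg fun j _ => hd j)
    · exact mul_nonneg (by norm_num)
        (Finset.sum_nonneg fun j hj => mul_nonneg (hE0 j hj) (hd j))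
  refine ⟨hS0, ?_⟩
  have ne0 : (Finset.univ : Finset (Fin n)).Nonempty := ⟨⟨0, hn⟩, Finset.mem_univ _⟩
  set M : (Fin n → ℝ) → Ω → ℝ := fun z ω =>
    Finset.univ.sup' (⟨⟨0, hn⟩, Finset.mem_univ _⟩ : (Finset.univ : Finset (Fin n)).Nonempty)
      (fun j => Om ω j * z j) with hM
  have hintM : ∀ z : Fin n → ℝ, Integrable (M z) μ := by
    intro z
    exact integrable_sup'_aux Finset.univ (fun j ω => Om ω j * z j)
      (fun j => (hint j).mul_const (z j)) _
  have hintS : Integrable (fun ω => ∑ j, Om ω j * (x j - y j)) μ :=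
    integrable_finset_sum _ (fun j _ => (hint j).mul_const _)
  -- pointwise a.e. bound
  have hae : ∀ᵐ ω ∂μ, M x ω ≤ M y ω + ∑ j, Om ω j * (x j - y j) := by
    filter_upwards [ae_all_iff.2 hnn] with ω h0
    apply Finset.sup'_le
    intro j _
    have h1 : Om ω j * x j = Om ω j * y j + Om ω j * (x j - y j) := by ring
    rw [h1]
    apply add_le_add
    · exact Finset.le_sup' (fun j => Om ω j * y j) (Finset.mem_univ j)
    · exact Finset.single_le_sum (fun i _ => mul_nonneg (h0 i) (hd i)) (Finset.mem_univ j)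
  have hkey : ∫ ω, M x ω ∂μ ≤ ∫ ω, M y ω ∂μ + ∑ j, (∫ ω, Om ω j ∂μ) * (x j - y j) := by
    calc ∫ ω, M x ω ∂μ ≤ ∫ ω, (M y ω + ∑ j, Om ω j * (x j - y j)) ∂μ :=
          integral_mono_ae (hintM x) ((hintM y).add hintS) hae
      _ = ∫ ω, M y ω ∂μ + ∑ j, (∫ ω, Om ω j ∂μ) * (x j - y j) := by
          rw [integral_add (hintM y) hintS, integral_finset_sum _ (fun j _ => (hint j).mul_const _)]
          simp [integral_mul_const]
  -- identify the sum
  have hsum : ∑ j, (∫ ω, Om ω j ∂μ) * (x j - y j)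
      = (∑ j ∈ A, (x j - y j)) + ∑ j ∈ Aᶜ, E j * (x j - y j) := by
    rw [← Finset.sum_add_sum_compl A]
    congr 1
    · apply Finset.sum_congr rfl
      intro j hj
      have : ∫ ω, Om ω j ∂μ = 1 := by
        rw [integral_congr_ae (hone j hj)]
        simp
      rw [this, one_mul]
    · exact Finset.sum_congr rfl fun j hj => by rw [hEeq j hj]
  rw [hf x, hf y]
  have hx1 : (∑ j ∈ A, x j) - (∑ j ∈ A, y j) = ∑ j ∈ A, (x j - y j) :=
    (Finset.sum_sub_distrib _ _).symm
  have hx2 : (∑ j ∈ Aᶜ, E j * x j) - (∑ j ∈ Aᶜ, E j * y j) = ∑ j ∈ Aᶜ, E j * (x j - y j) := by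
    rw [← Finset.sum_sub_distrib]
    exact Finset.sum_congr rfl fun j _ => by ring
  have hkey' := hkey
  rw [hsum] at hkey'
  have : ∫ ω, M x ω ∂μ = ∫ ω, Finset.univ.sup' ⟨⟨0, hn⟩, Finset.mem_univ _⟩
      (fun j => Om ω j * x j) ∂μ := rfl
  have : ∫ ω, M y ω ∂μ = ∫ ω, Finset.univ.sup' ⟨⟨0, hn⟩, Finset.mem_univ _⟩
      (fun j => Om ω j * y j) ∂μ := rfl
  linarith [hkey']
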